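/- For every real α > -1 and every positive integer n, the best Markov constant satisfies c_n(α)² ≤ n(n+1)/(2(α+1)). -/

import Mathlib

open MeasureTheory

/-- The weighted `L²` norm with the Laguerre weight `w_α(x) = x^α e^{-x}` on `(0,∞)`. -/
noncomputable def laguerreNorm (α : ℝ) (f : ℝ → ℝ) : ℝ :=
  Real.sqrt (∫ x in Set.Ioi (0 : ℝ), (f x) ^ 2 * (x ^ α * Real.exp (-x)))

/-- The best Markov constant `c_n(α)` in the inequality
`‖p'‖_{w_α} ≤ c_n(α) ‖p‖_{w_α}` over polynomials of degree at most `n`. -/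
noncomputable def markovConst (n : ℕ) (α : ℝ) : ℝ :=
  sSup {r : ℝ | ∃ p : Polynomial ℝ, p ≠ 0 ∧ p.natDegree ≤ n ∧
    r = laguerreNorm α (fun x => (Polynomial.derivative p).eval x) /
        laguerreNorm α (fun x => p.eval x)}

open Polynomial Finset

-- hockey stick for real binomials
lemma hockey (β : ℝ) : ∀ m : ℕ, ∑ s ∈ range (m+1), (∏ t ∈ range s, (β + t)) / (Nat.factorial s : ℝ)
    = (∏ t ∈ range m, (β + 1 + t)) / (Nat.factorial m : ℝ) := by
  intro m
  induction m with
  | zero => simp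
  | succ m ih =>
      rw [Finset.sum_range_succ, ih]
      have h1 : (∏ t ∈ range (m+1), (β + t)) = β * ∏ t ∈ range m, (β + 1 + t) := by
        rw [Finset.prod_range_succ']
        simp only [Nat.cast_add, Nat.cast_one, Nat.cast_zero, add_zero]
        rw [show (∏ x ∈ range m, (β + ((x:ℝ) + 1))) = ∏ t ∈ range m, (β + 1 + (t:ℝ)) from
          Finset.prod_congr rfl (fun t _ => by ring)]
        ring
      have h2 : (∏ t ∈ range (m+1), (β + 1 + t)) = (∏ t ∈ range m, (β + 1 + t)) * (β + 1 + m) := by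
        rw [Finset.prod_range_succ]
      rw [h1, h2]
      have hf : (((Nat.factorial m : ℝ) : ℝ)) ≠ 0 := by positivity
      have hf1 : ((Nat.factorial (m+1) : ℝ)) = (m+1) * (Nat.factorial m : ℝ) := by
        rw [Nat.factorial_succ]; push_cast; ring
      rw [hf1]
      field_simp
      ring

-- finite difference lemma
lemma findiff : ∀ (k : ℕ) (Q : Polynomial ℝ), Q.natDegree ≤ k →
    ∑ i ∈ range (k+1), (-1:ℝ)^i * (k.choose i) * Q.eval (i:ℝ) = (-1)^k * (Nat.factorial k : ℝ) * Q.coeff k := by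
  intro k
  induction k with
  | zero =>
      intro Q _
      simp [Polynomial.coeff_zero_eq_eval_zero]
  | succ k ih =>
      intro Q hQ
      set R : Polynomial ℝ := Q - Q.comp (X + C 1) with hR
      have hcompnd : (Q.comp (X + C 1)).natDegree = Q.natDegree := by
        rw [natDegree_comp, natDegree_X_add_C, mul_one]
      have hRnd : R.natDegree ≤ k := by
        rcases eq_or_lt_of_le hQ with h | h
        · -- natDegree Q = k+1
          have hQ0 : Q ≠ 0 := by
            intro h0; rw [h0] at h; simp at h
          have hlc : Q.leadingCoeff = (Q.comp (X + C 1)).leadingCoeff := by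
            rw [Polynomial.leadingCoeff_comp (by rw [natDegree_X_add_C]; norm_num : (X + C 1 : ℝ[X]).natDegree ≠ 0),
              (Polynomial.monic_X_add_C (1:ℝ)).leadingCoeff, one_pow, mul_one]
          have hdeg : Q.degree = (Q.comp (X + C 1)).degree := by
            have h1 : Q.comp (X + C 1) ≠ 0 := by
              intro h0
              have := hlc
              rw [h0] at this
              simp [Polynomial.leadingCoeff_eq_zero] at this
              exact hQ0 this
            rw [Polynomial.degree_eq_natDegree hQ0, Polynomial.degree_eq_natDegree h1, hcompnd]
          have := Polynomial.degree_sub_lt hdeg hQ0 hlc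
          rw [← hR] at this
          by_cases hR0 : R = 0
          · simp [hR0]
          · have h2 : (R.natDegree : WithBot ℕ) < (Q.natDegree : WithBot ℕ) := by
              rw [← Polynomial.degree_eq_natDegree hR0, ← Polynomial.degree_eq_natDegree hQ0]
              exact this
            have h3 : R.natDegree < Q.natDegree := by exact_mod_cast h2
            omega
        · have h' : Q.natDegree ≤ k := by omega
          calc R.natDegree ≤ max Q.natDegree (Q.comp (X + C 1)).natDegree :=
                Polynomial.natDegree_sub_le _ _
            _ ≤ k := by rw [hcompnd]; omega
      have hcoeffcomp : (Q.comp (X + C 1)).coeff k = Q.coeff k + (k+1) * Q.coeff (k+1) := by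
        rw [comp_eq_sum_left]
        rw [Polynomial.sum_over_range' Q (fun n => by simp) (k+2) (show Q.natDegree < k+2 by omega)]
        rw [Polynomial.finset_sum_coeff]
        have hterm : ∀ j, (C (Q.coeff j) * (X + C 1 : ℝ[X]) ^ j).coeff k
            = Q.coeff j * (j.choose k : ℝ) := by
          intro j
          rw [Polynomial.coeff_C_mul]
          congr 1
          have : (X + C 1 : ℝ[X]) = X + 1 := by simp
          rw [this, Polynomial.coeff_X_add_one_pow]
        simp_rw [hterm]
        rw [Finset.sum_range_succ, Finset.sum_range_succ]
        rw [Finset.sum_eq_zero (fun j hj => by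
          rw [Nat.choose_eq_zero_of_lt (Finset.mem_range.mp hj)]; simp)]
        simp [Nat.choose_succ_self_right]
        ring
      have hRcoeff : R.coeff k = -((k+1) * Q.coeff (k+1)) := by
        rw [hR, Polynomial.coeff_sub, hcoeffcomp]; ring
      have hReval : ∀ i : ℕ, R.eval (i:ℝ) = Q.eval (i:ℝ) - Q.eval ((i:ℝ)+1) := by
        intro i
        rw [hR]; simp [Polynomial.eval_comp]
      have hTk : (-1:ℝ)^k * (k.choose (k+1)) * Q.eval ((k:ℝ)+1) = 0 := by
        simp [Nat.choose_succ_self]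
      have hA : ∑ i ∈ range (k+1), (-1:ℝ)^i * (k.choose (i+1)) * Q.eval ((i:ℝ)+1)
          = Q.eval 0 - ∑ i ∈ range (k+1), (-1:ℝ)^i * (k.choose i) * Q.eval (i:ℝ) := by
        have h1 := Finset.sum_range_succ (fun i => (-1:ℝ)^i * (k.choose (i+1)) * Q.eval ((i:ℝ)+1)) k
        have h2 := Finset.sum_range_succ' (fun i => (-1:ℝ)^i * (k.choose i) * Q.eval (i:ℝ)) k
        have h3 : ∀ i ∈ range k, (-1:ℝ)^(i+1) * (k.choose (i+1)) * Q.eval ((i+1:ℕ):ℝ)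
            = -((-1:ℝ)^i * (k.choose (i+1)) * Q.eval ((i:ℝ)+1)) := by
          intro i _; push_cast; ring
        rw [Finset.sum_congr rfl h3, Finset.sum_neg_distrib] at h2
        rw [hTk] at h1
        simp only [Nat.cast_zero, Nat.choose_zero_right, Nat.cast_one, pow_zero, one_mul,
          add_zero] at h1 h2
        linarith [h1, h2]
      have hd : ∑ i ∈ range (k+2), (-1:ℝ)^i * ((k+1).choose i) * Q.eval (i:ℝ)
          = ∑ i ∈ range (k+1), (-1:ℝ)^i * (k.choose i) * (Q.eval (i:ℝ) - Q.eval ((i:ℝ)+1)) := by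
        have h2 := Finset.sum_range_succ' (fun i => (-1:ℝ)^i * ((k+1).choose i) * Q.eval (i:ℝ)) (k+1)
        have h3 : ∀ i ∈ range (k+1), (-1:ℝ)^(i+1) * ((k+1).choose (i+1)) * Q.eval ((i+1:ℕ):ℝ)
            = -((-1:ℝ)^i * (k.choose i) * Q.eval ((i:ℝ)+1))
              - (-1:ℝ)^i * (k.choose (i+1)) * Q.eval ((i:ℝ)+1) := by
          intro i _
          rw [Nat.choose_succ_succ]
          push_cast
          ring
        rw [Finset.sum_congr rfl h3, Finset.sum_sub_distrib, Finset.sum_neg_distrib, hA] at h2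
        rw [h2]
        simp only [Nat.cast_zero, Nat.choose_zero_right, Nat.cast_one, pow_zero, one_mul]
        simp only [mul_sub]
        rw [Finset.sum_sub_distrib]
        ring
      -- conclude
      have hmain := ih R hRnd
      have hcongr : ∀ i ∈ range (k+1), (-1:ℝ)^i * (k.choose i) * (Q.eval (i:ℝ) - Q.eval ((i:ℝ)+1))
          = (-1:ℝ)^i * (k.choose i) * R.eval (i:ℝ) := by
        intro i _; rw [hReval i]
      rw [hd, Finset.sum_congr rfl hcongr, hmain, hRcoeff]
      rw [Nat.factorial_succ]
      push_cast
      ring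
open Polynomial Finset

noncomputable def lagG (α : ℝ) (m : ℕ) : ℝ := Real.Gamma (α + 1 + m)

noncomputable def lagC (α : ℝ) (k i : ℕ) : ℝ :=
  (-1:ℝ)^i * (∏ t ∈ range (k-i), (α + 1 + i + t)) / ((Nat.factorial (k-i) : ℝ) * (Nat.factorial i : ℝ))

noncomputable def lagL (α : ℝ) (k : ℕ) : Polynomial ℝ :=
  ∑ i ∈ range (k+1), C (lagC α k i) * X ^ i

variable {α : ℝ}

lemma lagG_pos (hα : -1 < α) (m : ℕ) : 0 < lagG α m :=
  Real.Gamma_pos_of_pos (by push_cast; nlinarith [Nat.cast_nonneg (α:=ℝ) m])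

lemma lagG_succ (hα : -1 < α) (m : ℕ) : lagG α (m+1) = (α + 1 + m) * lagG α m := by
  have h : (α + 1 + (m:ℝ)) ≠ 0 := by have : (0:ℝ) ≤ m := Nat.cast_nonneg m; nlinarith
  have := Real.Gamma_add_one h
  unfold lagG
  push_cast
  rw [show α + 1 + ((m:ℝ) + 1) = (α + 1 + m) + 1 by ring, this]

lemma lagG_prod (hα : -1 < α) (i s : ℕ) :
    lagG α (i + s) = lagG α i * ∏ t ∈ range s, (α + 1 + i + t) := by
  induction s with
  | zero => simp
  | succ s ih =>
      rw [show i + (s+1) = (i+s)+1 by ring, lagG_succ hα, ih, Finset.prod_range_succ]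
      push_cast
      ring

lemma lagC_self (k : ℕ) : lagC α k k = (-1:ℝ)^k / (Nat.factorial k : ℝ) := by
  unfold lagC
  simp

lemma lagL_coeff (k i : ℕ) : (lagL α k).coeff i = if i ≤ k then lagC α k i else 0 := by
  unfold lagL
  rw [Polynomial.finset_sum_coeff]
  simp_rw [Polynomial.coeff_C_mul, Polynomial.coeff_X_pow]
  split
  · rename_i h
    rw [Finset.sum_eq_single i]
    · simp
    · intro b _ hb; simp [Ne.symm hb]
    · intro hmem; exact absurd (Finset.mem_range.mpr (by omega)) hmem
  · rename_i h
    apply Finset.sum_eq_zero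
    intro b hb
    have : b ≠ i := by rw [Finset.mem_range] at hb; omega
    simp [Ne.symm this]

lemma lagL_natDegree_le (k : ℕ) : (lagL α k).natDegree ≤ k := by
  apply Polynomial.natDegree_le_iff_coeff_eq_zero.mpr
  intro m hm
  rw [lagL_coeff]
  simp [Nat.not_le.mpr hm]
lemma lagL_derivative (k : ℕ) :
    Polynomial.derivative (lagL α k) = -∑ j ∈ range k, lagL α j := by
  ext i
  rw [Polynomial.coeff_derivative, Polynomial.coeff_neg, Polynomial.finset_sum_coeff]
  simp_rw [lagL_coeff]
  by_cases hik : i + 1 ≤ k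
  · -- main case
    have hfil : ∑ j ∈ range k, (if i ≤ j then lagC α j i else 0) = ∑ j ∈ Ico i k, lagC α j i := by
      rw [← Finset.sum_filter]
      congr 1
      ext j
      simp only [Finset.mem_filter, Finset.mem_range, Finset.mem_Ico]
      omega
    rw [if_pos hik, hfil, Finset.sum_Ico_eq_sum_range]
    set m := k - i - 1 with hm
    have hki : k - i = m + 1 := by omega
    have hki2 : k - (i+1) = m := by omega
    have hterm : ∀ s ∈ range (m+1), lagC α (i+s) i
        = ((-1:ℝ)^i / (Nat.factorial i : ℝ)) *
          ((∏ t ∈ range s, ((α + 1 + i) + t)) / (Nat.factorial s : ℝ)) := by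
      intro s _
      unfold lagC
      rw [Nat.add_sub_cancel_left]
      field_simp
    rw [hki, Finset.sum_congr rfl hterm, ← Finset.mul_sum, hockey (α + 1 + i) m]
    have hLHS : lagC α k (i+1) = (-1:ℝ)^(i+1) * (∏ t ∈ range m, ((α+1+i) + 1 + t))
        / ((Nat.factorial m : ℝ) * (Nat.factorial (i+1) : ℝ)) := by
      unfold lagC
      rw [hki2]
      congr 2
      apply Finset.prod_congr rfl
      intro t _
      push_cast
      ring
    rw [hLHS]
    have hfi : (Nat.factorial (i+1) : ℝ) = (i+1) * (Nat.factorial i : ℝ) := by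
      rw [Nat.factorial_succ]; push_cast; ring
    rw [hfi]
    have h1 : (Nat.factorial i : ℝ) ≠ 0 := by positivity
    have h2 : (Nat.factorial m : ℝ) ≠ 0 := by positivity
    have h3 : ((i:ℝ) + 1) ≠ 0 := by positivity
    field_simp
    push_cast
    ring
  · rw [if_neg hik]
    rw [Finset.sum_eq_zero (fun j hj => by
      rw [Finset.mem_range] at hj
      rw [if_neg (by omega)])]
    simp
lemma lagL_expansion : ∀ (d : ℕ) (p : Polynomial ℝ), p.natDegree < d →
    ∃ a : ℕ → ℝ, p = ∑ k ∈ range d, C (a k) * lagL α k := by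
  intro d
  induction d with
  | zero => intro p hp; omega
  | succ d ih =>
      intro p hp
      by_cases hp0 : p = 0
      · exact ⟨0, by simp [hp0]⟩
      set c : ℝ := p.coeff d * ((-1:ℝ)^d * (Nat.factorial d : ℝ)) with hc
      set q : Polynomial ℝ := p - C c * lagL α d with hq
      have hqd : q.coeff d = 0 := by
        rw [hq, Polynomial.coeff_sub, Polynomial.coeff_C_mul, lagL_coeff, if_pos le_rfl,
          lagC_self, hc]
        have h1 : (Nat.factorial d : ℝ) ≠ 0 := by positivity
        field_simp
        ring_nf
        rw [show (-1:ℝ)^(d*2) = 1 by rw [mul_comm, pow_mul]; simp]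
        ring
      have hqnd : q.natDegree ≤ d := by
        apply le_trans (Polynomial.natDegree_sub_le _ _)
        rw [max_le_iff]
        constructor
        · omega
        · exact le_trans (Polynomial.natDegree_C_mul_le _ _) (lagL_natDegree_le d)
      have hex : ∃ a' : ℕ → ℝ, q = ∑ k ∈ range d, C (a' k) * lagL α k := by
        by_cases hq0 : q = 0
        · exact ⟨0, by simp [hq0]⟩
        · apply ih
          have hne : q.natDegree ≠ d := by
            intro h
            exact (Polynomial.leadingCoeff_ne_zero.mpr hq0) (by rw [Polynomial.leadingCoeff, h]; exact hqd)
          omega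
      obtain ⟨a', ha'⟩ := hex
      refine ⟨Function.update a' d c, ?_⟩
      rw [Finset.sum_range_succ, Function.update_self]
      have hcg : ∀ k ∈ range d, C (Function.update a' d c k) * lagL α k
          = C (a' k) * lagL α k := by
        intro k hk
        rw [Finset.mem_range] at hk
        rw [Function.update_of_ne (by omega : k ≠ d)]
      rw [Finset.sum_congr rfl hcg, ← ha', hq]
      ring
open MeasureTheory

noncomputable def lagM (α : ℝ) (p : Polynomial ℝ) : ℝ :=
  ∫ x in Set.Ioi (0:ℝ), p.eval x * (x ^ α * Real.exp (-x))

lemma weight_int (hα : -1 < α) (m : ℕ) :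
    IntegrableOn (fun x : ℝ => x ^ m * (x ^ α * Real.exp (-x))) (Set.Ioi 0) := by
  have hpos : 0 < α + 1 + m := by
    have : (0:ℝ) ≤ m := Nat.cast_nonneg m
    linarith
  have h := Real.GammaIntegral_convergent hpos
  apply h.congr_fun ?_ measurableSet_Ioi
  intro x hx
  rw [Set.mem_Ioi] at hx
  have h1 : x ^ (α + 1 + (m:ℝ) - 1) = x ^ α * x ^ (m:ℕ) := by
    rw [show α + 1 + (m:ℝ) - 1 = α + m by ring, Real.rpow_add hx, Real.rpow_natCast]
  dsimp only
  rw [h1]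
  ring

lemma poly_int (hα : -1 < α) (p : Polynomial ℝ) :
    IntegrableOn (fun x : ℝ => p.eval x * (x ^ α * Real.exp (-x))) (Set.Ioi 0) := by
  have heq : (fun x : ℝ => p.eval x * (x ^ α * Real.exp (-x)))
      = fun x : ℝ => ∑ i ∈ range (p.natDegree + 1),
          p.coeff i * (x ^ i * (x ^ α * Real.exp (-x))) := by
    funext x
    rw [Polynomial.eval_eq_sum_range, Finset.sum_mul]
    apply Finset.sum_congr rfl
    intro i _
    ring
  rw [heq]
  apply integrable_finset_sum
  intro i _
  exact (weight_int hα i).const_mul _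

lemma lagM_pow (hα : -1 < α) (m : ℕ) : lagM α (X ^ m) = lagG α m := by
  have hpos : 0 < α + 1 + m := by
    have : (0:ℝ) ≤ m := Nat.cast_nonneg m
    linarith
  unfold lagM lagG
  rw [Real.Gamma_eq_integral hpos]
  apply setIntegral_congr_fun measurableSet_Ioi
  intro x hx
  rw [Set.mem_Ioi] at hx
  simp only [Polynomial.eval_pow, Polynomial.eval_X]
  have h1 : x ^ (α + 1 + (m:ℝ) - 1) = x ^ α * x ^ (m:ℕ) := by
    rw [show α + 1 + (m:ℝ) - 1 = α + m by ring, Real.rpow_add hx, Real.rpow_natCast]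
  rw [h1]
  ring

lemma lagM_sum (hα : -1 < α) {ι : Type*} (s : Finset ι) (f : ι → Polynomial ℝ) :
    lagM α (∑ i ∈ s, f i) = ∑ i ∈ s, lagM α (f i) := by
  unfold lagM
  have heq : ∀ x : ℝ, (∑ i ∈ s, f i).eval x * (x ^ α * Real.exp (-x))
      = ∑ i ∈ s, (f i).eval x * (x ^ α * Real.exp (-x)) := by
    intro x
    rw [Polynomial.eval_finset_sum, Finset.sum_mul]
  simp_rw [heq]
  rw [integral_finset_sum]
  intro i _
  exact poly_int hα (f i)

lemma lagM_Cmul (hα : -1 < α) (a : ℝ) (p : Polynomial ℝ) :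
    lagM α (C a * p) = a * lagM α p := by
  unfold lagM
  rw [← integral_const_mul]
  apply setIntegral_congr_fun measurableSet_Ioi
  intro x _
  simp only [Polynomial.eval_mul, Polynomial.eval_C]
  ring
lemma lagM_pow_mul_L (hα : -1 < α) (m k : ℕ) (hmk : m ≤ k) :
    lagM α (X ^ m * lagL α k)
      = (lagG α k / (Nat.factorial k : ℝ)) *
        ∑ i ∈ range (k+1), (-1:ℝ)^i * (k.choose i : ℝ) *
          (∏ t ∈ range m, ((X : Polynomial ℝ) + C (α+1+t)).eval (i:ℝ)) := by
  have hexp : (X : Polynomial ℝ) ^ m * lagL α k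
      = ∑ i ∈ range (k+1), C (lagC α k i) * X ^ (m+i) := by
    unfold lagL
    rw [Finset.mul_sum]
    apply Finset.sum_congr rfl
    intro i _
    rw [pow_add]
    ring
  rw [hexp, lagM_sum hα, Finset.mul_sum]
  apply Finset.sum_congr rfl
  intro i hi
  rw [Finset.mem_range] at hi
  have hik : i ≤ k := by omega
  rw [lagM_Cmul hα, lagM_pow hα]
  -- evaluate the product polynomial
  have heval : (∏ t ∈ range m, ((X : Polynomial ℝ) + C (α+1+t)).eval (i:ℝ))
      = ∏ t ∈ range m, (α + 1 + i + t) := by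
    apply Finset.prod_congr rfl
    intro t _
    simp only [Polynomial.eval_add, Polynomial.eval_X, Polynomial.eval_C]
    ring
  rw [heval]
  -- lagG α (m+i) = lagG α i * ∏_{t<m} (α+1+i+t)
  have hGmi : lagG α (m+i) = lagG α i * ∏ t ∈ range m, (α + 1 + i + t) := by
    rw [show m + i = i + m by ring, lagG_prod hα]
  -- ∏_{t<k-i}(α+1+i+t) = lagG α k / lagG α i
  have hGk : lagG α k = lagG α i * ∏ t ∈ range (k-i), (α + 1 + i + t) := by
    conv_lhs => rw [show k = i + (k-i) by omega]
    exact lagG_prod hα i (k-i)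
  unfold lagC
  rw [hGmi, hGk]
  have h1 : (Nat.factorial i : ℝ) ≠ 0 := by positivity
  have h2 : (Nat.factorial (k-i) : ℝ) ≠ 0 := by positivity
  have h3 : (Nat.factorial k : ℝ) ≠ 0 := by positivity
  have hchoose : (k.choose i : ℝ) * ((Nat.factorial i : ℝ) * (Nat.factorial (k-i) : ℝ))
      = (Nat.factorial k : ℝ) := by
    rw [← Nat.cast_mul, ← Nat.cast_mul, ← mul_assoc]
    exact_mod_cast congrArg (Nat.cast (R := ℝ)) (Nat.choose_mul_factorial_mul_factorial hik)
  field_simp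
  rw [← hchoose]
  ring
lemma lagM_pow_mul_L_lt (hα : -1 < α) {m k : ℕ} (h : m < k) :
    lagM α (X ^ m * lagL α k) = 0 := by
  rw [lagM_pow_mul_L hα m k h.le]
  set Q : Polynomial ℝ := ∏ t ∈ range m, ((X : Polynomial ℝ) + C (α+1+t)) with hQ
  have hQnd : Q.natDegree = m := by
    rw [hQ, Polynomial.natDegree_prod _ _ (fun t _ => (Polynomial.monic_X_add_C _).ne_zero),
      Finset.sum_congr rfl (fun t _ => Polynomial.natDegree_X_add_C _)]
    simp
  have hs : ∀ i ∈ range (k+1), (-1:ℝ)^i * (k.choose i : ℝ) *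
      (∏ t ∈ range m, ((X : Polynomial ℝ) + C (α+1+t)).eval (i:ℝ))
      = (-1:ℝ)^i * (k.choose i : ℝ) * Q.eval (i:ℝ) := by
    intro i _
    rw [hQ, Polynomial.eval_prod]
  rw [Finset.sum_congr rfl hs, findiff k Q (by omega)]
  rw [Polynomial.coeff_eq_zero_of_natDegree_lt (by omega)]
  simp

lemma lagM_pow_mul_L_self (hα : -1 < α) (k : ℕ) :
    lagM α (X ^ k * lagL α k) = (-1:ℝ)^k * lagG α k := by
  rw [lagM_pow_mul_L hα k k le_rfl]
  set Q : Polynomial ℝ := ∏ t ∈ range k, ((X : Polynomial ℝ) + C (α+1+t)) with hQ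
  have hQm : Q.Monic := Polynomial.monic_prod_of_monic _ _ (fun t _ => Polynomial.monic_X_add_C _)
  have hQnd : Q.natDegree = k := by
    rw [hQ, Polynomial.natDegree_prod _ _ (fun t _ => (Polynomial.monic_X_add_C _).ne_zero),
      Finset.sum_congr rfl (fun t _ => Polynomial.natDegree_X_add_C _)]
    simp
  have hs : ∀ i ∈ range (k+1), (-1:ℝ)^i * (k.choose i : ℝ) *
      (∏ t ∈ range k, ((X : Polynomial ℝ) + C (α+1+t)).eval (i:ℝ))
      = (-1:ℝ)^i * (k.choose i : ℝ) * Q.eval (i:ℝ) := by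
    intro i _
    rw [hQ, Polynomial.eval_prod]
  rw [Finset.sum_congr rfl hs, findiff k Q (by omega)]
  have : Q.coeff k = 1 := by
    have := hQm.coeff_natDegree
    rwa [hQnd] at this
  rw [this]
  have h3 : (Nat.factorial k : ℝ) ≠ 0 := by positivity
  field_simp

lemma lagM_L_mul_L (hα : -1 < α) {j k : ℕ} (hjk : j ≤ k) :
    lagM α (lagL α j * lagL α k)
      = if j = k then lagG α k / (Nat.factorial k : ℝ) else 0 := by
  have hexp : lagL α j * lagL α k = ∑ m ∈ range (j+1), C (lagC α j m) * (X ^ m * lagL α k) := by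
    conv_lhs => rw [lagL]
    rw [Finset.sum_mul]
    apply Finset.sum_congr rfl
    intro m _
    ring
  rw [hexp, lagM_sum hα]
  simp_rw [lagM_Cmul hα]
  by_cases h : j = k
  · subst h
    rw [if_pos rfl, Finset.sum_range_succ, lagM_pow_mul_L_self hα]
    rw [Finset.sum_eq_zero (fun m hm => by
      rw [Finset.mem_range] at hm
      rw [lagM_pow_mul_L_lt hα (show m < j by omega)]
      ring)]
    rw [lagC_self]
    have h3 : (Nat.factorial j : ℝ) ≠ 0 := by positivity
    field_simp
    rw [zero_mul, zero_add]
    rw [show ((-1:ℝ)^j)^2 = 1 by rw [← pow_mul, mul_comm, pow_mul]; simp]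
    ring
  · rw [if_neg h]
    apply Finset.sum_eq_zero
    intro m hm
    rw [Finset.mem_range] at hm
    rw [lagM_pow_mul_L_lt hα (show m < k by omega)]
    ring

lemma lagM_L_mul_L' (hα : -1 < α) (j k : ℕ) :
    lagM α (lagL α j * lagL α k)
      = if j = k then lagG α k / (Nat.factorial k : ℝ) else 0 := by
  rcases le_or_gt j k with h | h
  · exact lagM_L_mul_L hα h
  · rw [mul_comm, lagM_L_mul_L hα h.le, if_neg (by omega), if_neg (by omega)]
lemma lagM_parseval (hα : -1 < α) (N : ℕ) (a : ℕ → ℝ) :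
    lagM α ((∑ k ∈ range N, C (a k) * lagL α k) * (∑ k ∈ range N, C (a k) * lagL α k))
      = ∑ k ∈ range N, (a k)^2 * (lagG α k / (Nat.factorial k : ℝ)) := by
  rw [Finset.sum_mul_sum, lagM_sum hα]
  have hinner : ∀ i ∈ range N, lagM α (∑ j ∈ range N, (C (a i) * lagL α i) * (C (a j) * lagL α j))
      = (a i)^2 * (lagG α i / (Nat.factorial i : ℝ)) := by
    intro i hi
    rw [lagM_sum hα]
    have hterm : ∀ j ∈ range N, lagM α ((C (a i) * lagL α i) * (C (a j) * lagL α j))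
        = a i * a j * (if i = j then lagG α j / (Nat.factorial j : ℝ) else 0) := by
      intro j _
      have : (C (a i) * lagL α i) * (C (a j) * lagL α j)
          = C (a i * a j) * (lagL α i * lagL α j) := by
        rw [Polynomial.C_mul]
        ring
      rw [this, lagM_Cmul hα, lagM_L_mul_L' hα]
    rw [Finset.sum_congr rfl hterm]
    rw [Finset.sum_eq_single i]
    · rw [if_pos rfl]; ring
    · intro j _ hj; rw [if_neg (Ne.symm hj)]; ring
    · intro h; exact absurd hi h
  exact Finset.sum_congr rfl hinner

lemma tri_swap {M : Type*} [AddCommMonoid M] (N : ℕ) (F : ℕ → ℕ → M) :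
    ∑ k ∈ range N, ∑ j ∈ range k, F j k = ∑ j ∈ range N, ∑ k ∈ Ico (j+1) N, F j k := by
  induction N with
  | zero => simp
  | succ N ih =>
      rw [Finset.sum_range_succ, ih, Finset.sum_range_succ
        (fun j => ∑ k ∈ Ico (j+1) (N+1), F j k) N]
      rw [show Ico (N+1) (N+1) = (∅ : Finset ℕ) by simp]
      rw [Finset.sum_empty, add_zero, ← Finset.sum_add_distrib]
      apply Finset.sum_congr rfl
      intro j hj
      rw [Finset.mem_range] at hj
      exact (Finset.sum_Ico_succ_top (by omega) _).symm

lemma sum_h (hα : -1 < α) (k : ℕ) :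
    ∑ j ∈ range k, lagG α j / (Nat.factorial j : ℝ)
      = k * (lagG α k / (Nat.factorial k : ℝ)) / (α + 1) := by
  have hGj : ∀ j : ℕ, lagG α j = lagG α 0 * ∏ t ∈ range j, (α + 1 + t) := by
    intro j
    have := lagG_prod hα 0 j
    simpa using this
  cases k with
  | zero => simp
  | succ m =>
      have h1 : ∀ j ∈ range (m+1), lagG α j / (Nat.factorial j : ℝ)
          = lagG α 0 * ((∏ t ∈ range j, (α + 1 + (t:ℝ))) / (Nat.factorial j : ℝ)) := by
        intro j _
        rw [hGj j]
        ring
      rw [Finset.sum_congr rfl h1, ← Finset.mul_sum, hockey (α+1) m]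
      have h2 : lagG α (m+1) = lagG α 0 * ((α+1) * ∏ t ∈ range m, (α + 1 + 1 + (t:ℝ))) := by
        rw [hGj (m+1), Finset.prod_range_succ']
        have h3 : ∀ t ∈ range m, (α + 1 + ((t+1:ℕ):ℝ)) = α + 1 + 1 + (t:ℝ) := by
          intro t _; push_cast; ring
        rw [Finset.prod_congr rfl h3]
        push_cast
        ring
      rw [h2]
      have hfm : (Nat.factorial m : ℝ) ≠ 0 := by positivity
      have hfm1 : (Nat.factorial (m+1) : ℝ) = (m+1) * (Nat.factorial m : ℝ) := by
        rw [Nat.factorial_succ]; push_cast; ring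
      have ha1 : α + 1 ≠ 0 := by linarith
      rw [hfm1]
      field_simp
      push_cast
      ring
lemma lag_key (hα : -1 < α) (n : ℕ) (p : Polynomial ℝ) (hp0 : p ≠ 0) (hdeg : p.natDegree ≤ n) :
    lagM α (Polynomial.derivative p * Polynomial.derivative p)
      ≤ ((n:ℝ) * (n+1) / (2*(α+1))) * lagM α (p * p) ∧ 0 < lagM α (p * p) := by
  have ha1 : (0:ℝ) < α + 1 := by linarith
  obtain ⟨a, ha⟩ := lagL_expansion (n+1) p (by omega)
  set h : ℕ → ℝ := fun k => lagG α k / (Nat.factorial k : ℝ) with hh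
  have hpos : ∀ k, 0 < h k := by
    intro k
    have := lagG_pos hα k
    positivity
  have hMp : lagM α (p * p) = ∑ k ∈ range (n+1), (a k)^2 * h k := by
    rw [ha]; exact lagM_parseval hα (n+1) a
  have hTpos : 0 < lagM α (p * p) := by
    rw [hMp]
    apply Finset.sum_pos'
    · intro k _; have := (hpos k).le; positivity
    · by_contra hcon
      push_neg at hcon
      apply hp0
      rw [ha]
      apply Finset.sum_eq_zero
      intro k hk
      have h1 : (a k)^2 * h k ≤ 0 := hcon k hk
      have h2 : a k = 0 := by
        by_contra hne
        have h3 : 0 < (a k)^2 := by positivity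
        have h4 := mul_pos h3 (hpos k)
        linarith
      rw [h2]
      simp
  refine ⟨?_, hTpos⟩
  -- derivative expansion
  set b : ℕ → ℝ := fun j => -∑ k ∈ Ico (j+1) (n+1), a k with hbdef
  have hb : Polynomial.derivative p = ∑ j ∈ range (n+1), C (b j) * lagL α j := by
    rw [ha, Polynomial.derivative_sum]
    have hstep : ∀ k ∈ range (n+1), Polynomial.derivative (C (a k) * lagL α k)
        = -∑ j ∈ range k, C (a k) * lagL α j := by
      intro k _
      rw [Polynomial.derivative_C_mul, lagL_derivative k, mul_neg, Finset.mul_sum]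
    rw [Finset.sum_congr rfl hstep, Finset.sum_neg_distrib, tri_swap (n+1)
      (fun j k => C (a k) * lagL α j)]
    rw [← Finset.sum_neg_distrib]
    apply Finset.sum_congr rfl
    intro j _
    rw [← Finset.sum_mul, ← map_sum, hbdef]
    simp only [map_neg]
    ring
  have hMd : lagM α (Polynomial.derivative p * Polynomial.derivative p)
      = ∑ j ∈ range (n+1), (b j)^2 * h j := by
    rw [hb]; exact lagM_parseval hα (n+1) b
  set T : ℝ := ∑ k ∈ range (n+1), (a k)^2 * h k with hT
  have hTnn : 0 ≤ T := by
    apply Finset.sum_nonneg; intro k _; have := (hpos k).le; positivity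
  -- Cauchy–Schwarz per row
  have hCS : ∀ j, (b j)^2 ≤ (∑ k ∈ Ico (j+1) (n+1), (h k)⁻¹) * T := by
    intro j
    have hb2 : (b j)^2 = (∑ k ∈ Ico (j+1) (n+1), a k)^2 := by
      rw [hbdef]; exact neg_sq _
    have hcs := Finset.sum_mul_sq_le_sq_mul_sq (Ico (j+1) (n+1))
      (fun k => (Real.sqrt (h k))⁻¹) (fun k => a k * Real.sqrt (h k))
    have he1 : ∀ k ∈ Ico (j+1) (n+1), (Real.sqrt (h k))⁻¹ * (a k * Real.sqrt (h k)) = a k := by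
      intro k _
      have hs : Real.sqrt (h k) ≠ 0 := by
        have := Real.sqrt_pos.mpr (hpos k); linarith
      field_simp
    have he2 : ∀ k ∈ Ico (j+1) (n+1), ((Real.sqrt (h k))⁻¹)^2 = (h k)⁻¹ := by
      intro k _
      rw [inv_pow, Real.sq_sqrt (hpos k).le]
    have he3 : ∀ k ∈ Ico (j+1) (n+1), (a k * Real.sqrt (h k))^2 = (a k)^2 * h k := by
      intro k _
      rw [mul_pow, Real.sq_sqrt (hpos k).le]
    rw [Finset.sum_congr rfl he1, Finset.sum_congr rfl he2, Finset.sum_congr rfl he3] at hcs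
    rw [hb2]
    refine le_trans hcs ?_
    apply mul_le_mul_of_nonneg_left ?_ ?_
    · apply Finset.sum_le_sum_of_subset_of_nonneg
      · intro x hx
        rw [Finset.mem_Ico] at hx
        rw [Finset.mem_range]
        omega
      · intro k _ _; have := (hpos k).le; positivity
    · apply Finset.sum_nonneg; intro k _; exact (inv_nonneg.mpr (hpos k).le)
  -- sum up
  have hsum : lagM α (Polynomial.derivative p * Polynomial.derivative p)
      ≤ T * ∑ j ∈ range (n+1), (∑ k ∈ Ico (j+1) (n+1), (h k)⁻¹) * h j := by
    rw [hMd, Finset.mul_sum]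
    apply Finset.sum_le_sum
    intro j _
    have := mul_le_mul_of_nonneg_right (hCS j) (hpos j).le
    calc (b j)^2 * h j ≤ (∑ k ∈ Ico (j+1) (n+1), (h k)⁻¹) * T * h j := this
      _ = T * ((∑ k ∈ Ico (j+1) (n+1), (h k)⁻¹) * h j) := by ring
  -- Frobenius sum
  have hfrob : ∑ j ∈ range (n+1), (∑ k ∈ Ico (j+1) (n+1), (h k)⁻¹) * h j
      = (n:ℝ) * (n+1) / (2*(α+1)) := by
    have h1 : ∀ j ∈ range (n+1), (∑ k ∈ Ico (j+1) (n+1), (h k)⁻¹) * h j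
        = ∑ k ∈ Ico (j+1) (n+1), h j * (h k)⁻¹ := by
      intro j _
      rw [Finset.sum_mul]
      apply Finset.sum_congr rfl
      intro k _
      ring
    rw [Finset.sum_congr rfl h1, ← tri_swap (n+1) (fun j k => h j * (h k)⁻¹)]
    have h2 : ∀ k ∈ range (n+1), ∑ j ∈ range k, h j * (h k)⁻¹ = (k:ℝ) / (α+1) := by
      intro k _
      rw [← Finset.sum_mul]
      have hsh := sum_h hα k
      have hk := hpos k
      rw [hh] at hk ⊢
      simp only at hk ⊢
      rw [hsh]
      have hkne : lagG α k / (Nat.factorial k : ℝ) ≠ 0 := ne_of_gt hk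
      calc (k:ℝ) * (lagG α k / (Nat.factorial k : ℝ)) / (α+1) * (lagG α k / (Nat.factorial k : ℝ))⁻¹
          = (k:ℝ)/(α+1) * ((lagG α k / (Nat.factorial k : ℝ)) * (lagG α k / (Nat.factorial k : ℝ))⁻¹) := by
            ring
        _ = (k:ℝ)/(α+1) := by rw [mul_inv_cancel₀ hkne, mul_one]
    rw [Finset.sum_congr rfl h2]
    have h3 : ∑ k ∈ range (n+1), (k:ℝ) / (α+1) = (∑ k ∈ range (n+1), (k:ℝ)) / (α+1) := by
      rw [Finset.sum_div]
    rw [h3]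
    have h4 : (∑ k ∈ range (n+1), (k:ℝ)) = (n:ℝ) * (n+1) / 2 := by
      have := Finset.sum_range_id_mul_two (n+1)
      have h5 : ((∑ i ∈ range (n+1), i : ℕ) : ℝ) * 2 = ((n+1) : ℝ) * n := by
        exact_mod_cast congrArg (Nat.cast (R := ℝ)) this
      push_cast at h5 ⊢
      linarith
    rw [h4]
    rw [div_div]
  rw [hfrob] at hsum
  calc lagM α (Polynomial.derivative p * Polynomial.derivative p)
      ≤ T * ((n:ℝ) * (n+1) / (2*(α+1))) := hsum
    _ = ((n:ℝ) * (n+1) / (2*(α+1))) * lagM α (p * p) := by rw [hMp]; ring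
lemma lagNorm_eq (hα : -1 < α) (p : Polynomial ℝ) :
    laguerreNorm α (fun x => p.eval x) = Real.sqrt (lagM α (p * p)) := by
  unfold laguerreNorm lagM
  congr 1
  apply setIntegral_congr_fun measurableSet_Ioi
  intro x _
  simp only [Polynomial.eval_mul]
  ring

theorem markov_dorfler_upper (α : ℝ) (hα : -1 < α) (n : ℕ) (hn : 1 ≤ n) :
    (markovConst n α) ^ 2 ≤ n * (n + 1) / (2 * (α + 1)) := by
  have ha1 : (0:ℝ) < α + 1 := by linarith
  set Cst : ℝ := (n:ℝ) * (n+1) / (2*(α+1)) with hCst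
  have hCstnn : 0 ≤ Cst := by
    apply div_nonneg
    · positivity
    · linarith
  set S : Set ℝ := {r : ℝ | ∃ p : Polynomial ℝ, p ≠ 0 ∧ p.natDegree ≤ n ∧
    r = laguerreNorm α (fun x => (Polynomial.derivative p).eval x) /
        laguerreNorm α (fun x => p.eval x)} with hS
  have hmc : markovConst n α = sSup S := rfl
  have hbound : ∀ r ∈ S, r ≤ Real.sqrt Cst := by
    rintro r ⟨p, hp0, hdeg, rfl⟩
    obtain ⟨hineq, hpos⟩ := lag_key hα n p hp0 hdeg
    rw [lagNorm_eq hα, lagNorm_eq hα]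
    have hsB : 0 < Real.sqrt (lagM α (p * p)) := Real.sqrt_pos.mpr hpos
    rw [div_le_iff₀ hsB]
    calc Real.sqrt (lagM α (Polynomial.derivative p * Polynomial.derivative p))
        ≤ Real.sqrt (Cst * lagM α (p * p)) := Real.sqrt_le_sqrt hineq
      _ = Real.sqrt Cst * Real.sqrt (lagM α (p * p)) := Real.sqrt_mul hCstnn _
  have hle : markovConst n α ≤ Real.sqrt Cst := by
    apply Real.sSup_le hbound (Real.sqrt_nonneg _)
  have hnn : 0 ≤ markovConst n α := by
    have hmem : (laguerreNorm α (fun x => (Polynomial.derivative (X : Polynomial ℝ)).eval x) /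
        laguerreNorm α (fun x => (X : Polynomial ℝ).eval x)) ∈ S := by
      refine ⟨X, Polynomial.X_ne_zero, ?_, rfl⟩
      rw [Polynomial.natDegree_X]
      omega
    have hr0 : 0 ≤ laguerreNorm α (fun x => (Polynomial.derivative (X : Polynomial ℝ)).eval x) /
        laguerreNorm α (fun x => (X : Polynomial ℝ).eval x) := by
      apply div_nonneg <;> exact Real.sqrt_nonneg _
    have hbdd : BddAbove S := ⟨Real.sqrt Cst, fun r hr => hbound r hr⟩
    exact le_trans hr0 (le_csSup hbdd hmem)
  calc (markovConst n α) ^ 2 ≤ (Real.sqrt Cst) ^ 2 := by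
        apply pow_le_pow_left₀ hnn hle
    _ = Cst := Real.sq_sqrt hCstnn
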